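/- arXiv:1807.02325 — 2 statements merged into one kernel-verified Lean document; each statement's English description precedes it below -/
import Mathlib

section
/- For any finite subsets A, B ⊆ Z^d with d ≥ 3, Cap(A ∪ B) ≤ Cap(A) + Cap(B) − Cap(A ∩ B). -/
open Filter Finset MeasureTheory
open scoped symmDiff ENNReal

namespace SRW

/-- Vertices of `ℤ^d`. -/
abbrev V (d : ℕ) : Type := Fin d → ℤ

/-- The set of nearest-neighbor steps (the `2d` unit vectors `±e_i`) in `ℤ^d`. -/
def steps (d : ℕ) : Finset (V d) :=
  (Finset.univ : Finset (Fin d × Bool)).image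
    (fun p j => if j = p.1 then (if p.2 then 1 else -1) else 0)

/-- Position at time `k` of the walk started at `x` with step sequence `s`. -/
def pos {d : ℕ} (x : V d) (s : ℕ → V d) (k : ℕ) : V d :=
  x + ∑ i ∈ Finset.range k, s i

open Classical in
/-- Probability, for the simple random walk, of an event depending on the
first `n` steps (steps beyond `n` are set to `0`): each of the `(2d)^n`
admissible step sequences has equal probability. -/
noncomputable def probN (d n : ℕ) (P : (ℕ → V d) → Prop) : ℝ :=
  (((Fintype.piFinset fun _ : Fin n => steps d).filter
      (fun s => P fun i => if h : i < n then s ⟨i, h⟩ else 0)).card : ℝ) / ((2 * d : ℕ) : ℝ) ^ n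

/-- Expectation of a functional of the first `n` steps of the walk. -/
noncomputable def expN (d n : ℕ) (f : (ℕ → V d) → ℝ) : ℝ :=
  (∑ s ∈ Fintype.piFinset fun _ : Fin n => steps d,
      f fun i => if h : i < n then s ⟨i, h⟩ else 0) / ((2 * d : ℕ) : ℝ) ^ n

/-- Escape probability `P_x(H_A^+ = ∞)`: the walk started at `x` never
hits `A` at a positive time (decreasing limit of the finite-horizon events). -/
noncomputable def esc (d : ℕ) (A : Set (V d)) (x : V d) : ℝ :=
  ⨅ n : ℕ, probN d n (fun s => ∀ k, 1 ≤ k → k ≤ n → pos x s k ∉ A)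

/-- Newtonian capacity `Cap(A) = Σ_{x∈A} P_x(H_A^+ = ∞)`. -/
noncomputable def cap {d : ℕ} (A : Finset (V d)) : ℝ :=
  ∑ x ∈ A, esc d (↑A) x

/-- Green's function `G(z) = Σ_n P_0(S_n = z)`. -/
noncomputable def G (d : ℕ) (z : V d) : ℝ :=
  ∑' n : ℕ, probN d n (fun s => pos 0 s n = z)

/-- Truncated Green's function `G_T(z) = Σ_{n≤T} P_0(S_n = z)`. -/
noncomputable def GT (d T : ℕ) (z : V d) : ℝ :=
  ∑ n ∈ Finset.range (T + 1), probN d n (fun s => pos 0 s n = z)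

/-- Convolution `(G ⋆ G_T)(x) = Σ_y G(x-y) G_T(y)`. -/
noncomputable def GconvGT (d T : ℕ) (x : V d) : ℝ :=
  ∑' y : V d, G d (x - y) * GT d T y

/-- Euclidean norm on `ℤ^d`. -/
noncomputable def nrm {d : ℕ} (x : V d) : ℝ :=
  Real.sqrt (∑ i, ((x i : ℝ)) ^ 2)

/-- The range `{S_k : k ∈ I}` of the walk started at `x` over the set of times `I`. -/
noncomputable def rangeOn {d : ℕ} (x : V d) (s : ℕ → V d) (I : Finset ℕ) : Finset (V d) :=
  I.image (pos x s)

/-- Probability that the walk started at `z` hits both `A` and `B` in finite time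
(increasing limit of the finite-horizon probabilities). -/
noncomputable def hitBothProb (d : ℕ) (A B : Finset (V d)) (z : V d) : ℝ :=
  ⨆ n : ℕ, probN d n (fun s => (∃ k ≤ n, pos z s k ∈ A) ∧ (∃ k ≤ n, pos z s k ∈ B))

/-- The discrete cube `Q(x,r) = [x - r/2, x + r/2)^d ∩ ℤ^d`. -/
def cube {d : ℕ} (x : V d) (r : ℝ) : Set (V d) :=
  {y | ∀ i, (x i : ℝ) - r / 2 ≤ (y i : ℝ) ∧ (y i : ℝ) < (x i : ℝ) + r / 2}

/-- The corrector `ξ_n(T)`. -/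
noncomputable def xi (d n T : ℕ) (s : ℕ → V d) : ℝ :=
  ∑ k ∈ Finset.range (n + 1), ∑ x ∈ rangeOn 0 s (Finset.Icc 0 k),
    esc d (↑(rangeOn 0 s (Finset.Icc 0 k))) x * (GconvGT d T (x - pos 0 s k) / T)

/-- The capacity cross-term `χ_C(A,B) = Cap(A) + Cap(B) - Cap(A ∪ B)`. -/
noncomputable def chiC {d : ℕ} (A B : Finset (V d)) : ℝ := cap A + cap B - cap (A ∪ B)

open Classical in
/-- Conditional expectation, given the first `m` steps (equal to those of `s`),
of a functional of the first `n` steps. -/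
noncomputable def condExpN (d n m : ℕ) (f : (ℕ → V d) → ℝ) (s : ℕ → V d) : ℝ :=
  expN d n (fun s' => if ∀ i < m, s' i = s i then f s' else 0) * ((2 * d : ℕ) : ℝ) ^ m

/-- The compensator `ξ_n^*(T)`. -/
noncomputable def xiStar (d n T : ℕ) (s : ℕ → V d) : ℝ :=
  (1 / (T : ℝ)) * ∑ j ∈ Finset.range T, ∑ l ∈ Finset.Icc 1 (n / T - 1),
    condExpN d (n + T) (j + l * T)
      (fun s' => chiC (rangeOn 0 s' (Finset.Icc j (j + l * T)))
        (rangeOn 0 s' (Finset.Icc (j + l * T) (j + (l + 1) * T)))) s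

/-- `E[Cap(R_n)]`, the expected capacity of the range up to time `n`. -/
noncomputable def expCapRange (d n : ℕ) : ℝ :=
  expN d n (fun s => cap (rangeOn 0 s (Finset.Icc 0 n)))

/-- The maximal capacity `c_n` of the range of a nearest-neighbor path with `n` steps. -/
noncomputable def maxPathCap (d n : ℕ) : ℝ :=
  sSup {y : ℝ | ∃ (x : V d) (s : ℕ → V d), (∀ i, s i ∈ steps d) ∧
    y = cap (rangeOn x s (Finset.Icc 0 n))}

/-- `Γ(A,Λ) = Σ_{x∈A} Σ_{y∈Λ} G(y-x) P_y(H_Λ^+ = ∞)`. -/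
noncomputable def GamFin (d : ℕ) (A : Finset (V d)) (Λ : Set (V d)) : ℝ :=
  ∑ x ∈ A, ∑' y : Λ, G d ((y : V d) - x) * esc d Λ (y : V d)

/-- `P(Γ(R̃_∞, Λ) > t)`, as the increasing limit of the finite-horizon probabilities. -/
noncomputable def PGam (d : ℕ) (Λ : Set (V d)) (t : ℝ) : ℝ :=
  ⨆ N : ℕ, probN d N (fun s => t < GamFin d (rangeOn 0 s (Finset.Icc 0 N)) Λ)

/-- `E_x[Γ(R̃_∞, Λ)]`, as the increasing limit of the finite-horizon expectations. -/
noncomputable def EGam (d : ℕ) (x : V d) (Λ : Set (V d)) : ℝ :=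
  ⨆ N : ℕ, expN d N (fun s => GamFin d (rangeOn x s (Finset.Icc 0 N)) Λ)

/-- The law of the first `n` steps of two independent simple random walks:
uniform measure on pairs of admissible step sequences of length `n`. -/
noncomputable def pairLevel (d n : ℕ) : Measure ((Fin n → V d) × (Fin n → V d)) :=
  (((2 * d : ℕ) : ℝ≥0∞) ^ (2 * n))⁻¹ •
    ∑ a ∈ Fintype.piFinset fun _ : Fin n => steps d,
      ∑ b ∈ Fintype.piFinset fun _ : Fin n => steps d, Measure.dirac (a, b)

open Classical in
/-- `Γ(R̃_∞, R_∞) = Σ_{x ∈ R̃_∞} Σ_{y ∈ R_∞} G(y-x) P_y(H_{R_∞}^+ = ∞)` for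
two (step sequences of) walks, with values in `ℝ≥0∞`. -/
noncomputable def gammaInf (d : ℕ) (sA sB : ℕ → V d) : ℝ≥0∞ :=
  ∑' x : V d, ∑' y : V d,
    if x ∈ Set.range (pos (0 : V d) sA) ∧ y ∈ Set.range (pos (0 : V d) sB) then
      ENNReal.ofReal (G d (y - x) * esc d (Set.range (pos (0 : V d) sB)) y)
    else 0

section Aux
open Classical Topology

variable {d : ℕ}

/-- extension of a finite step sequence by zero -/
def ex (n : ℕ) (s : Fin n → V d) : ℕ → V d := fun i => if h : i < n then s ⟨i, h⟩ else 0

lemma probN_eq (n : ℕ) (P : (ℕ → V d) → Prop) :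
    probN d n P = (∑ s ∈ Fintype.piFinset fun _ : Fin n => steps d,
      if P (ex n s) then (1:ℝ) else 0) / ((2 * d : ℕ) : ℝ) ^ n := by
  rw [probN, Finset.card_filter]
  push_cast
  rfl

lemma probN_nonneg (n : ℕ) (P : (ℕ → V d) → Prop) : 0 ≤ probN d n P := by
  rw [probN]; positivity

lemma steps_card (d : ℕ) : (steps d).card = 2 * d := by
  rw [steps, Finset.card_image_of_injective _ ?_, Finset.card_univ, Fintype.card_prod,
    Fintype.card_fin, Fintype.card_bool, mul_comm]
  intro p q h
  have h1 := congrFun h p.1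
  simp only at h1
  by_cases hpq : p.1 = q.1
  · refine Prod.ext hpq ?_
    simp only [if_pos hpq, if_true] at h1
    cases hp : p.2 <;> cases hq : q.2 <;> simp [hp, hq] at h1 ⊢ <;> omega
  · simp only [if_neg hpq, if_true] at h1
    cases hp : p.2 <;> rw [hp] at h1 <;> simp at h1

lemma probN_mono (n : ℕ) {P Q : (ℕ → V d) → Prop} (h : ∀ s, P s → Q s) :
    probN d n P ≤ probN d n Q := by
  rw [probN_eq, probN_eq, div_eq_mul_inv, div_eq_mul_inv]
  refine mul_le_mul_of_nonneg_right (Finset.sum_le_sum fun s _ => ?_) (by positivity)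
  by_cases hP : P (ex n s)
  · rw [if_pos hP, if_pos (h _ hP)]
  · rw [if_neg hP]; split_ifs <;> norm_num

lemma twod_pos (hd : 0 < d) : (0:ℝ) < ((2 * d : ℕ) : ℝ) := by
  have : 0 < 2 * d := by omega
  exact_mod_cast this

lemma sum_piFinset_succ (n : ℕ) (f : (Fin (n+1) → V d) → ℝ) :
    ∑ s ∈ Fintype.piFinset (fun _ : Fin (n+1) => steps d), f s
      = ∑ p ∈ (Fintype.piFinset fun _ : Fin n => steps d) ×ˢ steps d, f (Fin.snoc p.1 p.2) := by
  refine Finset.sum_nbij' (fun s => (Fin.init s, s (Fin.last n)))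
    (fun p => Fin.snoc p.1 p.2) ?_ ?_ ?_ ?_ ?_
  · intro s hs
    rw [Fintype.mem_piFinset] at hs
    exact Finset.mem_product.mpr ⟨Fintype.mem_piFinset.mpr fun i => hs _, hs _⟩
  · intro p hp
    rw [Finset.mem_product] at hp
    refine Fintype.mem_piFinset.mpr fun i => ?_
    induction i using Fin.lastCases with
    | last => simpa using hp.2
    | cast i => simpa using Fintype.mem_piFinset.mp hp.1 i
  · intro s _; exact Fin.snoc_init_self s
  · intro p _
    simp [Fin.init_snoc, Fin.snoc_last]
  · intro s _; rw [Fin.snoc_init_self]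

lemma ex_snoc_agree (n : ℕ) (a : Fin n → V d) (c : V d) :
    ∀ i < n, ex (n+1) (Fin.snoc a c) i = ex n a i := by
  intro i hi
  have hi' : i < n + 1 := Nat.lt_succ_of_lt hi
  rw [ex, ex, dif_pos hi', dif_pos hi]
  have : (⟨i, hi'⟩ : Fin (n+1)) = Fin.castSucc ⟨i, hi⟩ := rfl
  rw [this, Fin.snoc_castSucc]

lemma probN_succ (hd : 0 < d) (n : ℕ) (P : (ℕ → V d) → Prop)
    (hP : ∀ s t : ℕ → V d, (∀ i < n, s i = t i) → (P s ↔ P t)) :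
    probN d (n+1) P = probN d n P := by
  rw [probN_eq, probN_eq, sum_piFinset_succ]
  rw [Finset.sum_product]
  have : ∀ a ∈ (Fintype.piFinset fun _ : Fin n => steps d),
      (∑ c ∈ steps d, if P (ex (n+1) (Fin.snoc a c)) then (1:ℝ) else 0)
        = ((2*d : ℕ) : ℝ) * (if P (ex n a) then (1:ℝ) else 0) := by
    intro a _
    have : ∀ c ∈ steps d, (if P (ex (n+1) (Fin.snoc a c)) then (1:ℝ) else 0)
        = (if P (ex n a) then (1:ℝ) else 0) := by
      intro c _
      by_cases h : P (ex n a)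
      · rw [if_pos h, if_pos (((hP _ _ (ex_snoc_agree n a c))).mpr h)]
      · rw [if_neg h, if_neg (fun hh => h (((hP _ _ (ex_snoc_agree n a c))).mp hh))]
    rw [Finset.sum_congr rfl this, Finset.sum_const, steps_card, nsmul_eq_mul]
  rw [Finset.sum_congr rfl this, ← Finset.mul_sum, pow_succ]
  have h2 : ((2*d : ℕ) : ℝ) ≠ 0 := (twod_pos hd).ne'
  field_simp

lemma probN_of_le (hd : 0 < d) {n N : ℕ} (hnN : n ≤ N) (P : (ℕ → V d) → Prop)
    (hP : ∀ s t : ℕ → V d, (∀ i < n, s i = t i) → (P s ↔ P t)) :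
    probN d N P = probN d n P := by
  induction N, hnN using Nat.le_induction with
  | base => rfl
  | succ m hm ih =>
    rw [← ih]
    exact probN_succ hd m P fun s t h => hP s t fun i hi => h i (lt_of_lt_of_le hi hm)

lemma pos_congr {x : V d} {s t : ℕ → V d} {k : ℕ} (h : ∀ i < k, s i = t i) :
    pos x s k = pos x t k := by
  unfold pos
  congr 1
  exact Finset.sum_congr rfl fun i hi => h i (Finset.mem_range.mp hi)

/-- avoidance event -/
def Av (D : Set (V d)) (x : V d) (n : ℕ) : (ℕ → V d) → Prop :=
  fun s => ∀ k, 1 ≤ k → k ≤ n → pos x s k ∉ D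

lemma Av_dep (D : Set (V d)) (x : V d) (n : ℕ) :
    ∀ s t : ℕ → V d, (∀ i < n, s i = t i) → (Av D x n s ↔ Av D x n t) := by
  intro s t h
  have key : ∀ k ≤ n, pos x s k = pos x t k := fun k hk =>
    pos_congr fun i hi => h i (lt_of_lt_of_le hi hk)
  constructor <;> intro hA k h1 h2
  · rw [← key k h2]; exact hA k h1 h2
  · rw [key k h2]; exact hA k h1 h2

lemma esc_eq (D : Set (V d)) (x : V d) : esc d D x = ⨅ n : ℕ, probN d n (Av D x n) := rfl

lemma aN_antitone (hd : 0 < d) (D : Set (V d)) (x : V d) :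
    Antitone fun n => probN d n (Av D x n) := by
  apply antitone_nat_of_succ_le
  intro n
  calc probN d (n+1) (Av D x (n+1))
      ≤ probN d (n+1) (Av D x n) := probN_mono _ fun s hs k h1 h2 => hs k h1 (h2.trans n.le_succ)
    _ = probN d n (Av D x n) := probN_succ hd n _ (Av_dep D x n)

lemma tendsto_aN (hd : 0 < d) (D : Set (V d)) (x : V d) :
    Tendsto (fun n => probN d n (Av D x n)) atTop (𝓝 (esc d D x)) := by
  rw [esc_eq]
  exact tendsto_atTop_ciInf (aN_antitone hd D x)
    ⟨0, fun y ⟨n, hn⟩ => hn ▸ probN_nonneg n _⟩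

/-- time-reversed negated step sequence -/
def rv (n : ℕ) (s : Fin n → V d) : Fin n → V d := fun i => - s i.rev

lemma neg_mem_steps {v : V d} (hv : v ∈ steps d) : -v ∈ steps d := by
  rw [steps, Finset.mem_image] at hv ⊢
  obtain ⟨p, -, rfl⟩ := hv
  refine ⟨(p.1, !p.2), Finset.mem_univ _, ?_⟩
  funext j
  by_cases h : j = p.1 <;> cases hb : p.2 <;> simp [h, hb]

lemma rv_mem {n : ℕ} {s : Fin n → V d}
    (hs : s ∈ Fintype.piFinset fun _ : Fin n => steps d) :
    rv n s ∈ Fintype.piFinset fun _ : Fin n => steps d :=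
  Fintype.mem_piFinset.mpr fun i => neg_mem_steps (Fintype.mem_piFinset.mp hs _)

lemma rv_rv (n : ℕ) (s : Fin n → V d) : rv n (rv n s) = s := by
  funext i; simp [rv, Fin.rev_rev]

lemma sum_ex (n : ℕ) (s : Fin n → V d) :
    ∑ i ∈ Finset.range n, ex n s i = ∑ i, s i := by
  rw [← Fin.sum_univ_eq_sum_range]
  exact Finset.sum_congr rfl fun i _ => by simp [ex, i.is_lt]

lemma sum_rv (n : ℕ) (s : Fin n → V d) : ∑ i, rv n s i = - ∑ i, s i := by
  rw [← Finset.sum_neg_distrib]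
  exact Fintype.sum_equiv (Fin.revPerm) _ _ fun i => rfl

lemma pos_zero (x : V d) (s : ℕ → V d) : pos x s 0 = x := by
  simp [pos]

lemma pos_ex_top (x : V d) (n : ℕ) (s : Fin n → V d) :
    pos x (ex n s) n = x + ∑ i, s i := by
  rw [pos, sum_ex]

lemma pos_rv (x : V d) (n : ℕ) (s : Fin n → V d) {k : ℕ} (hk : k ≤ n) :
    pos (x + ∑ i, s i) (ex n (rv n s)) k = pos x (ex n s) (n - k) := by
  unfold pos
  have h1 : ∑ i ∈ Finset.range k, ex n (rv n s) i
      = - ∑ i ∈ Finset.range k, ex n s (n - 1 - i) := by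
    rw [← Finset.sum_neg_distrib]
    refine Finset.sum_congr rfl fun i hi => ?_
    have hin : i < n := lt_of_lt_of_le (Finset.mem_range.mp hi) hk
    have hin' : n - 1 - i < n := by omega
    rw [ex, ex, dif_pos hin, dif_pos hin']
    show rv n s ⟨i, hin⟩ = - s ⟨n - 1 - i, hin'⟩
    rw [rv]
    have hrv : (⟨i, hin⟩ : Fin n).rev = ⟨n - 1 - i, hin'⟩ := by
      refine Fin.ext ?_
      rw [Fin.val_rev]
      show n - (i + 1) = n - 1 - i
      omega
    rw [hrv]
  have h2 : ∑ i, s i = (∑ i ∈ Finset.range (n - k), ex n s i)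
      + ∑ i ∈ Finset.range k, ex n s (n - 1 - i) := by
    rw [← sum_ex n s]
    have hadd := Finset.sum_range_add (fun i => ex n s i) (n - k) k
    rw [Nat.sub_add_cancel hk] at hadd
    rw [hadd]
    congr 1
    · rw [← Finset.sum_range_reflect (fun j => ex n s (n - k + j)) k]
      refine Finset.sum_congr rfl fun i hi => ?_
      have hik := Finset.mem_range.mp hi
      have harith : n - k + (k - 1 - i) = n - 1 - i := by omega
      show ex n s (n - k + (k - 1 - i)) = ex n s (n - 1 - i)
      rw [harith]
  rw [h1, h2]
  abel

/-- first-hitting event at time exactly `n` -/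
def FH (D : Set (V d)) (y : V d) (n : ℕ) : (ℕ → V d) → Prop :=
  fun s => pos y s n ∈ D ∧ ∀ k < n, pos y s k ∉ D

lemma FH_dep (D : Set (V d)) (y : V d) (n : ℕ) :
    ∀ s t : ℕ → V d, (∀ i < n, s i = t i) → (FH D y n s ↔ FH D y n t) := by
  intro s t h
  have key : ∀ k ≤ n, pos y s k = pos y t k := fun k hk =>
    pos_congr fun i hi => h i (lt_of_lt_of_le hi hk)
  unfold FH
  rw [key n le_rfl]
  constructor <;> rintro ⟨h1, h2⟩ <;> refine ⟨h1, fun k hk => ?_⟩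
  · rw [← key k hk.le]; exact h2 k hk
  · rw [key k hk.le]; exact h2 k hk

lemma card_filter_product (n : ℕ) (E : Finset (V d)) (Q : V d → (Fin n → V d) → Prop) :
    ∑ x ∈ E, (∑ s ∈ Fintype.piFinset fun _ : Fin n => steps d,
        if Q x s then (1:ℝ) else 0)
      = (((E ×ˢ Fintype.piFinset fun _ : Fin n => steps d).filter
          fun p => Q p.1 p.2).card : ℝ) := by
  rw [Finset.card_filter]
  push_cast
  rw [Finset.sum_product]

lemma rev_count (n : ℕ) (D Y : Finset (V d))
    (hY : ∀ x ∈ D, ∀ s ∈ (Fintype.piFinset fun _ : Fin n => steps d),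
      x + ∑ i, s i ∈ Y) :
    ∑ x ∈ D, probN d n (Av (↑D) x n) = ∑ y ∈ Y, probN d n (FH (↑D) y n) := by
  simp only [probN_eq]
  rw [← Finset.sum_div, ← Finset.sum_div]
  congr 1
  rw [card_filter_product n D (fun x s => Av (↑D) x n (ex n s)),
    card_filter_product n Y (fun y s => FH (↑D) y n (ex n s))]
  congr 1
  refine Finset.card_bij' (fun p _ => (p.1 + ∑ i, p.2 i, rv n p.2))
    (fun q _ => (pos q.1 (ex n q.2) n, rv n q.2)) ?_ ?_ ?_ ?_
  · -- forward membership
    intro p hp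
    rw [Finset.mem_filter, Finset.mem_product] at hp
    obtain ⟨⟨hpD, hpS⟩, hAv⟩ := hp
    rw [Finset.mem_filter, Finset.mem_product]
    refine ⟨⟨hY _ hpD _ hpS, rv_mem hpS⟩, ?_⟩
    constructor
    · show pos (p.1 + ∑ i, p.2 i) (ex n (rv n p.2)) n ∈ (↑D : Set (V d))
      rw [pos_rv _ _ _ le_rfl, Nat.sub_self, pos_zero]
      exact_mod_cast hpD
    · intro k hk
      show pos (p.1 + ∑ i, p.2 i) (ex n (rv n p.2)) k ∉ (↑D : Set (V d))
      rw [pos_rv _ _ _ hk.le]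
      exact hAv (n - k) (by omega) (by omega)
  · -- backward membership
    intro q hq
    rw [Finset.mem_filter, Finset.mem_product] at hq
    obtain ⟨⟨hqY, hqS⟩, hFH⟩ := hq
    rw [Finset.mem_filter, Finset.mem_product]
    have hy : q.1 = pos q.1 (ex n q.2) n + ∑ i, rv n q.2 i := by
      rw [pos_ex_top, sum_rv]; abel
    refine ⟨⟨by exact_mod_cast hFH.1, rv_mem hqS⟩, ?_⟩
    intro k h1 h2
    show pos (pos q.1 (ex n q.2) n) (ex n (rv n q.2)) k ∉ (↑D : Set (V d))
    rw [pos_ex_top, pos_rv _ _ _ h2]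
    exact hFH.2 (n - k) (by omega)
  · -- left inverse
    intro p hp
    rw [Finset.mem_filter, Finset.mem_product] at hp
    refine Prod.ext ?_ (rv_rv n p.2)
    show pos (p.1 + ∑ i, p.2 i) (ex n (rv n p.2)) n = p.1
    rw [pos_rv _ _ _ le_rfl, Nat.sub_self, pos_zero]
  · -- right inverse
    intro q hq
    refine Prod.ext ?_ (rv_rv n q.2)
    show pos q.1 (ex n q.2) n + ∑ i, rv n q.2 i = q.1
    rw [pos_ex_top, sum_rv]
    abel

/-- hitting event by time `N` -/
def Hit (D : Set (V d)) (y : V d) (N : ℕ) : (ℕ → V d) → Prop :=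
  fun s => ∃ k ≤ N, pos y s k ∈ D

lemma FH_sum_ind (D : Set (V d)) (y : V d) (N : ℕ) (u : ℕ → V d) :
    (∑ n ∈ Finset.range (N+1), if FH D y n u then (1:ℝ) else 0)
      = if Hit D y N u then 1 else 0 := by
  by_cases h : Hit D y N u
  · obtain ⟨k0, hk0, hmem⟩ := h
    have hne : ∃ k, pos y u k ∈ D := ⟨k0, hmem⟩
    rw [if_pos ⟨k0, hk0, hmem⟩]
    rw [Finset.sum_eq_single_of_mem (Nat.find hne) (Finset.mem_range.mpr (by
      have := Nat.find_min' hne hmem; omega))]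
    · rw [if_pos ⟨Nat.find_spec hne, fun k hk => Nat.find_min hne hk⟩]
    · intro n hn hne'
      rw [if_neg]
      rintro ⟨h1, h2⟩
      rcases lt_or_gt_of_ne hne' with h' | h'
      · exact Nat.find_min hne h' h1
      · exact h2 (Nat.find hne) h' (Nat.find_spec hne)
  · rw [if_neg h]
    apply Finset.sum_eq_zero
    intro n hn
    rw [if_neg]
    rintro ⟨h1, -⟩
    exact h ⟨n, by have := Finset.mem_range.mp hn; omega, h1⟩

lemma sum_FH_eq_hit (hd : 0 < d) (N : ℕ) (D : Set (V d)) (y : V d) :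
    ∑ n ∈ Finset.range (N+1), probN d n (FH D y n) = probN d N (Hit D y N) := by
  have hlift : ∀ n ∈ Finset.range (N+1), probN d n (FH D y n) = probN d N (FH D y n) :=
    fun n hn => (probN_of_le hd (by have := Finset.mem_range.mp hn; omega) _ (FH_dep D y n)).symm
  rw [Finset.sum_congr rfl hlift]
  simp only [probN_eq]
  rw [← Finset.sum_div]
  congr 1
  rw [Finset.sum_comm]
  exact Finset.sum_congr rfl fun s _ => FH_sum_ind D y N (ex N s)

lemma hit_prob_ineq (A B : Finset (V d)) (y : V d) (N : ℕ) :
    probN d N (Hit (↑(A ∪ B)) y N) + probN d N (Hit (↑(A ∩ B)) y N)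
      ≤ probN d N (Hit (↑A) y N) + probN d N (Hit (↑B) y N) := by
  simp only [probN_eq]
  rw [← add_div, ← add_div, div_eq_mul_inv, div_eq_mul_inv]
  refine mul_le_mul_of_nonneg_right ?_ (by positivity)
  rw [← Finset.sum_add_distrib, ← Finset.sum_add_distrib]
  refine Finset.sum_le_sum fun s _ => ?_
  have hU : Hit (↑(A ∪ B)) y N (ex N s) → Hit (↑A) y N (ex N s) ∨ Hit (↑B) y N (ex N s) := by
    rintro ⟨k, hk, hm⟩
    rcases Finset.mem_union.mp (by exact_mod_cast hm) with h | h
    · exact Or.inl ⟨k, hk, by exact_mod_cast h⟩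
    · exact Or.inr ⟨k, hk, by exact_mod_cast h⟩
  have hI : Hit (↑(A ∩ B)) y N (ex N s) → Hit (↑A) y N (ex N s) ∧ Hit (↑B) y N (ex N s) := by
    rintro ⟨k, hk, hm⟩
    have hm' := Finset.mem_inter.mp (by exact_mod_cast hm)
    exact ⟨⟨k, hk, by exact_mod_cast hm'.1⟩, ⟨k, hk, by exact_mod_cast hm'.2⟩⟩
  split_ifs <;> norm_num <;> tauto

end Aux

open scoped Topology in
/-- Subadditivity: `Cap(A ∪ B) ≤ Cap(A) + Cap(B) - Cap(A ∩ B)` for `d ≥ 3`. -/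
theorem cap_union_le {d : ℕ} (hd : 3 ≤ d) (A B : Finset (V d)) :
    cap (A ∪ B) ≤ cap A + cap B - cap (A ∩ B) := by
  classical
  have hd0 : 0 < d := by omega
  set S : Finset (V d) → ℕ → ℝ :=
    fun D N => ∑ n ∈ Finset.range N, ∑ x ∈ D, probN d n (Av (↑D) x n) with hS
  have key : ∀ N : ℕ, S (A ∪ B) (N+1) + S (A ∩ B) (N+1) ≤ S A (N+1) + S B (N+1) := by
    intro N
    set Y : Finset (V d) := (Finset.range (N+1)).biUnion fun n =>
      Finset.image (fun p : V d × (Fin n → V d) => p.1 + ∑ i, p.2 i)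
        ((A ∪ B) ×ˢ Fintype.piFinset fun _ : Fin n => steps d) with hYdef
    have convS : ∀ (D : Finset (V d)), D ⊆ A ∪ B →
        S D (N+1) = ∑ y ∈ Y, probN d N (Hit (↑D) y N) := by
      intro D hD
      have hY : ∀ n ∈ Finset.range (N+1), ∀ x ∈ D,
          ∀ s ∈ (Fintype.piFinset fun _ : Fin n => steps d), x + ∑ i, s i ∈ Y := by
        intro n hn x hx s hs
        exact Finset.mem_biUnion.mpr ⟨n, hn, Finset.mem_image.mpr
          ⟨(x, s), Finset.mem_product.mpr ⟨hD hx, hs⟩, rfl⟩⟩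
      rw [hS]
      simp only
      rw [Finset.sum_congr rfl (fun n hn => rev_count n D Y (hY n hn)), Finset.sum_comm]
      exact Finset.sum_congr rfl fun y _ => sum_FH_eq_hit hd0 N (↑D) y
    have hIU : A ∩ B ⊆ A ∪ B := fun x hx =>
      Finset.mem_union_left _ (Finset.mem_inter.mp hx).1
    rw [convS (A ∪ B) le_rfl, convS (A ∩ B) hIU, convS A Finset.subset_union_left,
      convS B Finset.subset_union_right, ← Finset.sum_add_distrib, ← Finset.sum_add_distrib]
    exact Finset.sum_le_sum fun y _ => hit_prob_ineq A B y N
  have tendstoCap : ∀ D : Finset (V d),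
      Tendsto (fun N : ℕ => ((N+1 : ℕ) : ℝ)⁻¹ * S D (N+1)) atTop (𝓝 (cap D)) := by
    intro D
    have h1 : Tendsto (fun n => ∑ x ∈ D, probN d n (Av (↑D) x n)) atTop (𝓝 (cap D)) := by
      rw [cap]
      exact tendsto_finset_sum _ fun x _ => tendsto_aN hd0 (↑D) x
    have h2 := h1.cesaro.comp (tendsto_add_atTop_nat 1)
    convert h2 using 2
    rfl
  have hfinal : cap (A ∪ B) + cap (A ∩ B) ≤ cap A + cap B := by
    refine le_of_tendsto_of_tendsto' ((tendstoCap (A ∪ B)).add (tendstoCap (A ∩ B)))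
      ((tendstoCap A).add (tendstoCap B)) fun N => ?_
    rw [← mul_add, ← mul_add]
    exact mul_le_mul_of_nonneg_left (key N) (by positivity)
  linarith

end SRW
end

section
/- Assume d ≥ 3. Let S : N → Z^d be any function and K ⊆ N be such that for some ρ ∈ (0,1) and r ≥ 1, the occupation count ℓ_K(Q(x,r)) := #{k ∈ K : S(k) ∈ Q(x,r)} satisfies ℓ_K(Q(x,r)) ≤ ρ r^d for all x ∈ rZ^d. Then there exists a constant C₃ > 0 (independent of ρ, r, S, K) such that for any R ≥ 2r and any z ∈ Z^d, Σ_{k∈K} 1{2r ≤ ‖S(k)−z‖ ≤ R} · ‖S(k)−z‖^{−(d−2)} ≤ C₃ ρ R². -/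
open Filter Finset MeasureTheory
open scoped symmDiff ENNReal

namespace SRW

lemma nrm_nonneg {d : ℕ} (x : V d) : 0 ≤ nrm x := Real.sqrt_nonneg _

lemma abs_coord_le_nrm {d : ℕ} (x : V d) (i : Fin d) : |(x i : ℝ)| ≤ nrm x := by
  rw [nrm, ← Real.sqrt_sq_eq_abs]
  exact Real.sqrt_le_sqrt (Finset.single_le_sum (f := fun j => ((x j : ℝ)) ^ 2)
    (fun j _ => sq_nonneg _) (Finset.mem_univ i))

open Classical in
lemma count_ball {d : ℕ} (ρ : ℝ) (r : ℕ) (hr : 1 ≤ r)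
    (S : ℕ → V d) (K : Finset ℕ)
    (hK : ∀ m : V d, ((K.filter fun k => S k ∈ cube (r • m) (r : ℝ)).card : ℝ) ≤ ρ * (r : ℝ) ^ d)
    (z : V d) (s : ℝ) (hs : 0 ≤ s) :
    ((K.filter fun k => nrm (S k - z) ≤ s).card : ℝ) ≤ ρ * (2 * s + 2 * (r : ℝ)) ^ d := by
  have hr0 : (0:ℝ) < r := by exact_mod_cast hr
  set s' : ℝ := s + (r : ℝ) / 2 with hs'
  have hs'0 : 0 ≤ s' := by positivity
  set lo : Fin d → ℤ := fun i => ⌈((z i : ℝ) - s') / r⌉ with hlo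
  set hi : Fin d → ℤ := fun i => ⌊((z i : ℝ) + s') / r⌋ with hhi
  set M : Finset (V d) := Fintype.piFinset fun i => Finset.Icc (lo i) (hi i) with hM
  clear_value s' lo hi M
  have hsub : (K.filter fun k => nrm (S k - z) ≤ s) ⊆
      M.biUnion (fun m => K.filter fun k => S k ∈ cube (r • m) (r : ℝ)) := by
    intro k hk
    rw [Finset.mem_filter] at hk
    obtain ⟨hkK, hks⟩ := hk
    set m : V d := fun i => ⌊(S k i : ℝ) / r + 1/2⌋ with hm
    have hround : ∀ i, (S k i : ℝ) / r - 1/2 < (m i : ℝ) ∧ (m i : ℝ) ≤ (S k i : ℝ) / r + 1/2 := by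
      intro i
      have hmi : (m i : ℝ) = ((⌊(S k i : ℝ) / r + 1/2⌋ : ℤ) : ℝ) := rfl
      constructor
      · have := Int.sub_one_lt_floor ((S k i : ℝ) / r + 1/2)
        rw [hmi]; linarith
      · have := Int.floor_le ((S k i : ℝ) / r + 1/2)
        rw [hmi]; linarith
    have hbnd : ∀ i, (r : ℝ) * (m i : ℝ) - r/2 ≤ (S k i : ℝ) ∧ (S k i : ℝ) < (r:ℝ) * (m i) + r/2 := by
      intro i
      obtain ⟨h1, h2⟩ := hround i
      constructor
      · have := mul_le_mul_of_nonneg_left h2 hr0.le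
        rw [mul_add, mul_div_cancel₀ _ hr0.ne'] at this
        linarith
      · have := mul_lt_mul_of_pos_left h1 hr0
        rw [mul_sub, mul_div_cancel₀ _ hr0.ne'] at this
        linarith
    have hcube : S k ∈ cube (r • m) (r : ℝ) := by
      intro i
      have : ((r • m) i : ℝ) = (r : ℝ) * (m i : ℝ) := by
        simp [Pi.smul_apply]
      rw [this]
      exact ⟨(hbnd i).1, (hbnd i).2⟩
    have hcoord : ∀ i, |(S k i : ℝ) - (z i : ℝ)| ≤ s := by
      intro i
      have := abs_coord_le_nrm (S k - z) i
      simp only [Pi.sub_apply] at this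
      push_cast at this
      exact this.trans hks
    have hmem : m ∈ M := by
      rw [hM, Fintype.mem_piFinset]
      intro i
      rw [Finset.mem_Icc]
      have hc := hcoord i
      rw [abs_le] at hc
      obtain ⟨hb1, hb2⟩ := hbnd i
      constructor
      · rw [hlo]
        apply Int.ceil_le.mpr
        rw [div_le_iff₀ hr0]
        have hcm : (m i : ℝ) * (r:ℝ) = (r:ℝ) * (m i : ℝ) := mul_comm _ _
        linarith [hc.1, hb2]
      · rw [hhi]
        apply Int.le_floor.mpr
        rw [le_div_iff₀ hr0]
        have hcm : (m i : ℝ) * (r:ℝ) = (r:ℝ) * (m i : ℝ) := mul_comm _ _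
        linarith [hc.2, hb1]
    exact Finset.mem_biUnion.mpr ⟨m, hmem, Finset.mem_filter.mpr ⟨hkK, hcube⟩⟩
  have hMcard : (M.card : ℝ) ≤ (2 * s' / r + 1) ^ d := by
    have hfac : ∀ i : Fin d, ((Finset.Icc (lo i) (hi i)).card : ℝ) ≤ 2 * s' / r + 1 := by
      intro i
      rcases le_or_gt (lo i) (hi i) with h | h
      · have hcard : ((Finset.Icc (lo i) (hi i)).card : ℝ) = (hi i : ℝ) + 1 - (lo i : ℝ) := by
          have hnn : (0:ℤ) ≤ hi i + 1 - lo i := by omega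
          have hcast : (((hi i + 1 - lo i).toNat : ℕ) : ℝ) = (hi i : ℝ) + 1 - (lo i : ℝ) := by
            rw [show (((hi i + 1 - lo i).toNat : ℕ) : ℝ) = (((hi i + 1 - lo i).toNat : ℤ) : ℝ) by push_cast; ring,
              Int.toNat_of_nonneg hnn]
            push_cast; ring
          rw [Int.card_Icc, hcast]
        rw [hcard]
        have h1 : (hi i : ℝ) ≤ ((z i : ℝ) + s') / r := by
          rw [hhi]; exact Int.floor_le _
        have h2 : ((z i : ℝ) - s') / r ≤ (lo i : ℝ) := by
          rw [hlo]; exact Int.le_ceil _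
        have key : ((z i : ℝ) + s') / r - ((z i : ℝ) - s') / r = 2 * s' / r := by ring
        linarith
      · rw [Finset.Icc_eq_empty (by omega)]
        simp
        positivity
    calc (M.card : ℝ) = ∏ i : Fin d, ((Finset.Icc (lo i) (hi i)).card : ℝ) := by
          rw [hM, Fintype.card_piFinset]; push_cast; ring
      _ ≤ ∏ i : Fin d, (2 * s' / r + 1) := Finset.prod_le_prod (fun i _ => by positivity) (fun i _ => hfac i)
      _ = (2 * s' / r + 1) ^ d := by rw [Finset.prod_const, Finset.card_univ, Fintype.card_fin]
  have hρ0 : 0 ≤ ρ := by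
    have := hK 0
    have h0 : (0:ℝ) ≤ ρ * (r:ℝ)^d := le_trans (by positivity) this
    nlinarith [pow_pos hr0 d]
  calc ((K.filter fun k => nrm (S k - z) ≤ s).card : ℝ)
      ≤ ((M.biUnion fun m => K.filter fun k => S k ∈ cube (r • m) (r:ℝ)).card : ℝ) := by
        exact_mod_cast Finset.card_le_card hsub
    _ ≤ ∑ m ∈ M, ((K.filter fun k => S k ∈ cube (r • m) (r:ℝ)).card : ℝ) := by
        exact_mod_cast Finset.card_biUnion_le
    _ ≤ ∑ m ∈ M, ρ * (r:ℝ)^d := Finset.sum_le_sum fun m _ => hK m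
    _ = (M.card : ℝ) * (ρ * (r:ℝ)^d) := by rw [Finset.sum_const, nsmul_eq_mul]
    _ ≤ (2 * s' / r + 1) ^ d * (ρ * (r:ℝ)^d) := by
        apply mul_le_mul_of_nonneg_right hMcard (by positivity)
    _ = ρ * (2 * s + 2 * (r:ℝ)) ^ d := by
        have hkey : (2 * s' / r + 1) * (r:ℝ) = 2 * s + 2 * (r:ℝ) := by
          rw [hs']; field_simp; ring
        rw [← hkey, mul_pow]
        ring

open Classical in
/-- Local density bound: if the occupation counts of all cubes `Q(x,r)`, `x ∈ rℤ^d`,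
are at most `ρ r^d`, then for all `R ≥ 2r` and `z`,
`Σ_{k∈K, 2r ≤ ‖S(k)-z‖ ≤ R} ‖S(k)-z‖^{-(d-2)} ≤ C₃ ρ R²`. -/
theorem local_density_annulus_sum {d : ℕ} (hd : 3 ≤ d) :
    ∃ C₃ : ℝ, 0 < C₃ ∧ ∀ (ρ : ℝ), 0 < ρ → ρ < 1 → ∀ r : ℕ, 1 ≤ r →
      ∀ (S : ℕ → V d) (K : Finset ℕ),
      (∀ m : V d, ((K.filter fun k => S k ∈ cube (r • m) (r : ℝ)).card : ℝ)
          ≤ ρ * (r : ℝ) ^ d) →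
      ∀ R : ℝ, 2 * (r : ℝ) ≤ R → ∀ z : V d,
      ∑ k ∈ K.filter fun k => 2 * (r : ℝ) ≤ nrm (S k - z) ∧ nrm (S k - z) ≤ R,
          1 / nrm (S k - z) ^ (d - 2) ≤ C₃ * ρ * R ^ 2 := by
  refine ⟨4 * 8 ^ d, by positivity, ?_⟩
  intro ρ hρ0 hρ1 r hr S K hK R hR z
  have hr0 : (0:ℝ) < r := by exact_mod_cast hr
  set a : ℝ := 2 * (r : ℝ) with ha
  have ha0 : (0:ℝ) < a := by positivity
  set f : ℕ → ℝ := fun k => 1 / nrm (S k - z) ^ (d - 2) with hf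
  have hf0 : ∀ k, 0 ≤ f k := fun k => by
    rw [hf]
    exact one_div_nonneg.mpr (pow_nonneg (nrm_nonneg _) _)
  set n : ℕ := ⌊R / a⌋₊ with hn
  have hRa : (1:ℝ) ≤ R / a := (one_le_div ha0).mpr hR
  have hn1 : 1 ≤ n := Nat.le_floor (by exact_mod_cast hRa)
  set J : ℕ := Nat.log 2 n with hJ
  have h2J : (2:ℝ) ^ J * a ≤ R := by
    have h1 : (2:ℕ) ^ J ≤ n := Nat.pow_log_le_self 2 (by omega)
    have h2 : (n : ℝ) ≤ R / a := Nat.floor_le (by positivity)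
    have h3 : ((2:ℝ)) ^ J ≤ R / a := le_trans (by exact_mod_cast h1) h2
    calc (2:ℝ) ^ J * a ≤ (R / a) * a := mul_le_mul_of_nonneg_right h3 ha0.le
      _ = R := div_mul_cancel₀ _ ha0.ne'
  have cover : ∀ k ∈ K.filter fun k => a ≤ nrm (S k - z) ∧ nrm (S k - z) ≤ R,
      f k ≤ ∑ j ∈ Finset.range (J + 1),
        (if a * 2 ^ j ≤ nrm (S k - z) ∧ nrm (S k - z) < a * 2 ^ (j + 1) then f k else 0) := by
    intro k hk
    rw [Finset.mem_filter] at hk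
    obtain ⟨-, h1, h2⟩ := hk
    set t : ℝ := nrm (S k - z) with ht
    clear_value t
    set p : ℕ := ⌊t / a⌋₊ with hp
    have hta : (1:ℝ) ≤ t / a := (one_le_div ha0).mpr h1
    have hp1 : 1 ≤ p := Nat.le_floor (by exact_mod_cast hta)
    set j : ℕ := Nat.log 2 p with hj
    have hja : a * 2 ^ j ≤ t := by
      have h3 : (2:ℕ) ^ j ≤ p := Nat.pow_log_le_self 2 (by omega)
      have h4 : ((2:ℝ)) ^ j ≤ t / a :=
        le_trans (by exact_mod_cast h3) (Nat.floor_le (by positivity))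
      calc a * 2 ^ j ≤ a * (t / a) := mul_le_mul_of_nonneg_left h4 ha0.le
        _ = t := mul_div_cancel₀ _ ha0.ne'
    have hjb : t < a * 2 ^ (j + 1) := by
      have h3 : p < 2 ^ (j + 1) := Nat.lt_pow_succ_log_self (by norm_num) p
      have h4 : t / a < (p : ℝ) + 1 := Nat.lt_floor_add_one _
      have h5 : (p : ℝ) + 1 ≤ (2:ℝ) ^ (j + 1) := by exact_mod_cast Nat.succ_le_of_lt h3
      have h6 : t / a < (2:ℝ) ^ (j + 1) := lt_of_lt_of_le h4 h5
      calc t = a * (t / a) := (mul_div_cancel₀ _ ha0.ne').symm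
        _ < a * 2 ^ (j + 1) := mul_lt_mul_of_pos_left h6 ha0
    have hjJ : j ≤ J := by
      have h3 : (2:ℕ) ^ j ≤ p := Nat.pow_log_le_self 2 (by omega)
      have h4 : p ≤ n := by
        rw [hp, hn]
        exact Nat.floor_mono (by gcongr)
      have h5 : (2:ℕ) ^ j ≤ n := le_trans h3 h4
      rw [hJ]
      exact (Nat.le_log_iff_pow_le (by norm_num) (by omega)).mpr h5
    have heq : f k = (if a * 2 ^ j ≤ t ∧ t < a * 2 ^ (j + 1) then f k else 0) :=
      (if_pos ⟨hja, hjb⟩).symm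
    refine le_trans (le_of_eq heq) (Finset.single_le_sum
      (f := fun j => if a * 2 ^ j ≤ t ∧ t < a * 2 ^ (j + 1) then f k else 0)
      (fun i _ => ?_) (Finset.mem_range.mpr (Nat.lt_succ_of_le hjJ)))
    split_ifs
    · exact hf0 k
    · exact le_rfl
  have shell : ∀ j ∈ Finset.range (J + 1),
      (∑ k ∈ K.filter fun k => a ≤ nrm (S k - z) ∧ nrm (S k - z) ≤ R,
        (if a * 2 ^ j ≤ nrm (S k - z) ∧ nrm (S k - z) < a * 2 ^ (j + 1) then f k else 0))
      ≤ ρ * (a ^ 2 * 8 ^ d * 4 ^ j) := by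
    intro j _
    set b : ℝ := a * 2 ^ j with hb
    have hb0 : (0:ℝ) < b := by positivity
    have h2j1 : (1:ℝ) ≤ 2 ^ j := one_le_pow₀ (by norm_num)
    rw [← Finset.sum_filter]
    set T : Finset ℕ := (K.filter fun k => a ≤ nrm (S k - z) ∧ nrm (S k - z) ≤ R).filter
      (fun k => a * 2 ^ j ≤ nrm (S k - z) ∧ nrm (S k - z) < a * 2 ^ (j + 1)) with hT
    have hTsub : T ⊆ K.filter fun k => nrm (S k - z) ≤ a * 2 ^ (j + 1) := by
      intro k hk
      rw [hT, Finset.mem_filter, Finset.mem_filter] at hk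
      exact Finset.mem_filter.mpr ⟨hk.1.1, le_of_lt hk.2.2⟩
    have hTcard : (T.card : ℝ) ≤ ρ * (2 * (a * 2 ^ (j + 1)) + 2 * (r:ℝ)) ^ d := by
      refine le_trans ?_ (count_ball ρ r hr S K hK z (a * 2 ^ (j + 1)) (by positivity))
      exact_mod_cast Finset.card_le_card hTsub
    have hterm : ∀ k ∈ T, f k ≤ 1 / b ^ (d - 2) := by
      intro k hk
      rw [hT, Finset.mem_filter] at hk
      rw [hf]
      apply one_div_le_one_div_of_le (by positivity)
      exact pow_le_pow_left₀ hb0.le hk.2.1 _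
    calc ∑ k ∈ T, f k ≤ ∑ k ∈ T, 1 / b ^ (d - 2) := Finset.sum_le_sum hterm
      _ = (T.card : ℝ) * (1 / b ^ (d - 2)) := by rw [Finset.sum_const, nsmul_eq_mul]
      _ ≤ (ρ * (2 * (a * 2 ^ (j + 1)) + 2 * (r:ℝ)) ^ d) * (1 / b ^ (d - 2)) := by
          apply mul_le_mul_of_nonneg_right hTcard (by positivity)
      _ ≤ (ρ * (8 * b) ^ d) * (1 / b ^ (d - 2)) := by
          apply mul_le_mul_of_nonneg_right _ (by positivity)
          apply mul_le_mul_of_nonneg_left _ hρ0.le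
          apply pow_le_pow_left₀ (by positivity)
          have h2r : 2 * (r:ℝ) = a := ha.symm
          have hpow : (2:ℝ) ^ (j + 1) = 2 ^ j * 2 := pow_succ 2 j
          have haa : a ≤ a * 2 ^ j := le_mul_of_one_le_right ha0.le h2j1
          rw [hpow, hb]
          nlinarith [haa, h2r, ha0.le]
      _ = ρ * (a ^ 2 * 8 ^ d * 4 ^ j) := by
          have hd2 : d - 2 + 2 = d := by omega
          have hbd : b ^ d = b ^ (d - 2) * b ^ 2 := by rw [← pow_add, hd2]
          have h4 : ((2:ℝ) ^ j) ^ 2 = 4 ^ j := by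
            rw [← pow_mul, mul_comm, pow_mul]; norm_num
          have hbsq : b ^ 2 = a ^ 2 * 4 ^ j := by rw [hb, mul_pow, h4]
          have hbne : b ^ (d - 2) ≠ 0 := by positivity
          have hstep : (ρ * (8 * b) ^ d) * (1 / b ^ (d - 2))
              = ρ * 8 ^ d * b ^ 2 * (b ^ (d - 2) * (1 / b ^ (d - 2))) := by
            rw [mul_pow, hbd]; ring
          rw [hstep, mul_one_div, div_self hbne, mul_one, hbsq]
          ring
  have hgeom : ∑ j ∈ Finset.range (J + 1), (4:ℝ) ^ j ≤ 2 * 4 ^ J := by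
    rw [geom_sum_eq (by norm_num : (4:ℝ) ≠ 1) (J + 1), pow_succ]
    have h40 : (0:ℝ) < 4 ^ J := by positivity
    rw [div_le_iff₀ (by norm_num : (0:ℝ) < 4 - 1)]
    linarith
  calc ∑ k ∈ K.filter fun k => a ≤ nrm (S k - z) ∧ nrm (S k - z) ≤ R, f k
      ≤ ∑ k ∈ K.filter fun k => a ≤ nrm (S k - z) ∧ nrm (S k - z) ≤ R,
          ∑ j ∈ Finset.range (J + 1),
            (if a * 2 ^ j ≤ nrm (S k - z) ∧ nrm (S k - z) < a * 2 ^ (j + 1) then f k else 0) :=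
        Finset.sum_le_sum cover
    _ = ∑ j ∈ Finset.range (J + 1),
          ∑ k ∈ K.filter fun k => a ≤ nrm (S k - z) ∧ nrm (S k - z) ≤ R,
            (if a * 2 ^ j ≤ nrm (S k - z) ∧ nrm (S k - z) < a * 2 ^ (j + 1) then f k else 0) :=
        Finset.sum_comm
    _ ≤ ∑ j ∈ Finset.range (J + 1), ρ * (a ^ 2 * 8 ^ d * 4 ^ j) := Finset.sum_le_sum shell
    _ = (ρ * a ^ 2 * 8 ^ d) * ∑ j ∈ Finset.range (J + 1), (4:ℝ) ^ j := by
        rw [Finset.mul_sum]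
        exact Finset.sum_congr rfl fun j _ => by ring
    _ ≤ (ρ * a ^ 2 * 8 ^ d) * (2 * 4 ^ J) := by
        apply mul_le_mul_of_nonneg_left hgeom (by positivity)
    _ ≤ 4 * 8 ^ d * ρ * R ^ 2 := by
        have hRR : (a * 2 ^ J) ^ 2 ≤ R ^ 2 :=
          pow_le_pow_left₀ (by positivity) (by linarith [h2J]) 2
        have hexp : (a * 2 ^ J) ^ 2 = a ^ 2 * 4 ^ J := by
          rw [mul_pow, ← pow_mul, mul_comm J 2, pow_mul]; norm_num
        have h8 : (0:ℝ) < 8 ^ d := by positivity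
        have hX : (0:ℝ) ≤ 8 ^ d * ρ * R ^ 2 :=
          mul_nonneg (mul_nonneg h8.le hρ0.le) (sq_nonneg R)
        calc (ρ * a ^ 2 * 8 ^ d) * (2 * 4 ^ J) = 2 * 8 ^ d * ρ * ((a * 2 ^ J) ^ 2) := by
              rw [hexp]; ring
          _ ≤ 2 * 8 ^ d * ρ * R ^ 2 := by
              apply mul_le_mul_of_nonneg_left hRR (by positivity)
          _ ≤ 4 * 8 ^ d * ρ * R ^ 2 := by linarith [hX]


end SRW
end
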